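/- Invariance of Det(G^(1) + H_l H_ν) under flavor basis transformations: let n ≥ 1, let U, W ∈ U(n,ℂ) be unitary, and let M_l, M_ν be n×n complex matrices. Define H_l = M_l M_lᴴ, H_ν = M_ν M_νᴴ, G^(1) = M_ν (conj H_l) M_νᴴ, and define H_l', H_ν', G'^(1) by the same formulas from M_l' = U M_l Wᴴ and M_ν' = U M_ν Uᵀ. Then det(G'^(1) + H_l' H_ν') = det(G^(1) + H_l H_ν). -/

import Mathlib

open Matrix

set_option maxHeartbeats 1000000

/-- Invariance of `Det(G^{(1)} + H_l H_ν)` under flavor basis transformations: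
for `U, W` unitary and `M_l' = U M_l Wᴴ`, `M_ν' = U M_ν Uᵀ`, with
`H_l = M_l M_lᴴ`, `H_ν = M_ν M_νᴴ`, `G^{(1)} = M_ν (conj H_l) M_νᴴ` (and the
primed quantities defined by the same formulas from the primed mass matrices),
one has `det(G'^{(1)} + H_l' H_ν') = det(G^{(1)} + H_l H_ν)`. -/
theorem det_flavor_invariant (n : ℕ) (hn : 1 ≤ n)
    (U W Ml Mν : Matrix (Fin n) (Fin n) ℂ)
    (hU : U ∈ Matrix.unitaryGroup (Fin n) ℂ)
    (hW : W ∈ Matrix.unitaryGroup (Fin n) ℂ)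
    (Ml' Mν' : Matrix (Fin n) (Fin n) ℂ)
    (hMl' : Ml' = U * Ml * Wᴴ) (hMν' : Mν' = U * Mν * Uᵀ) :
    det (Mν' * ((Ml' * Ml'ᴴ).map (starRingEnd ℂ)) * Mν'ᴴ +
          (Ml' * Ml'ᴴ) * (Mν' * Mν'ᴴ)) =
      det (Mν * ((Ml * Mlᴴ).map (starRingEnd ℂ)) * Mνᴴ +
          (Ml * Mlᴴ) * (Mν * Mνᴴ)) := by
  subst hMl' hMν'
  have htc : ∀ A : Matrix (Fin n) (Fin n) ℂ, Aᵀᴴ = A.map (starRingEnd ℂ) := by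
    intro A; ext i j; simp [Matrix.conjTranspose_apply]
  have hcc : Uᴴ.map (starRingEnd ℂ) = Uᵀ := by
    ext i j; simp [Matrix.conjTranspose_apply]
  have h1 : Uᴴ * U = 1 := Matrix.mem_unitaryGroup_iff'.mp hU
  have h2 : U * Uᴴ = 1 := Matrix.mem_unitaryGroup_iff.mp hU
  have h3 : Wᴴ * W = 1 := Matrix.mem_unitaryGroup_iff'.mp hW
  have h4 : Uᵀ * (U.map (starRingEnd ℂ)) = 1 := by
    have := congrArg Matrix.transpose h1
    simpa [Matrix.transpose_mul, Matrix.conjTranspose, Matrix.transpose_map] using this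
  have h1' : ∀ A : Matrix (Fin n) (Fin n) ℂ, A * Uᴴ * U = A := fun A => by
    rw [mul_assoc, h1, mul_one]
  have h3' : ∀ A : Matrix (Fin n) (Fin n) ℂ, A * Wᴴ * W = A := fun A => by
    rw [mul_assoc, h3, mul_one]
  have h4' : ∀ A : Matrix (Fin n) (Fin n) ℂ, A * Uᵀ * U.map (starRingEnd ℂ) = A := fun A => by
    rw [mul_assoc, h4, mul_one]
  have hHl' : (U * Ml * Wᴴ) * (U * Ml * Wᴴ)ᴴ = U * (Ml * Mlᴴ) * Uᴴ := by
    simp only [Matrix.conjTranspose_mul, Matrix.conjTranspose_conjTranspose, ← mul_assoc]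
    rw [h3']
  have hHν' : (U * Mν * Uᵀ) * (U * Mν * Uᵀ)ᴴ = U * (Mν * Mνᴴ) * Uᴴ := by
    simp only [Matrix.conjTranspose_mul, htc, ← mul_assoc]
    rw [h4']
  have hG' : (U * Mν * Uᵀ) * ((U * (Ml * Mlᴴ) * Uᴴ).map (starRingEnd ℂ)) * (U * Mν * Uᵀ)ᴴ
      = U * (Mν * ((Ml * Mlᴴ).map (starRingEnd ℂ)) * Mνᴴ) * Uᴴ := by
    simp only [Matrix.conjTranspose_mul, htc, Matrix.map_mul, hcc, ← mul_assoc]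
    rw [h4', h4']
  rw [hHl', hHν', hG']
  have hmid : U * (Ml * Mlᴴ) * Uᴴ * (U * (Mν * Mνᴴ) * Uᴴ)
      = U * ((Ml * Mlᴴ) * (Mν * Mνᴴ)) * Uᴴ := by
    simp only [← mul_assoc]
    rw [h1']
  rw [hmid]
  have key : U * (Mν * ((Ml * Mlᴴ).map (starRingEnd ℂ)) * Mνᴴ) * Uᴴ +
      U * ((Ml * Mlᴴ) * (Mν * Mνᴴ)) * Uᴴ
      = U * (Mν * ((Ml * Mlᴴ).map (starRingEnd ℂ)) * Mνᴴ +
          (Ml * Mlᴴ) * (Mν * Mνᴴ)) * Uᴴ := by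
    rw [Matrix.mul_add, Matrix.add_mul]
  rw [key, Matrix.det_mul, Matrix.det_mul]
  have hdet : U.det * Uᴴ.det = 1 := by
    rw [← Matrix.det_mul, h2, Matrix.det_one]
  rw [mul_right_comm, hdet, one_mul]
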